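/- If words w and w' are in the same commutation class, then there exists an isomorphism of labeled posets f : P(w) → P(w'), i.e., a poset isomorphism with w'_{f(i)} = w_i for all i. -/

import Mathlib

def CommMove {S : Type*} (comm : S → S → Prop) (w w' : List S) : Prop :=
  ∃ (u v : List S) (a b : S), comm a b ∧ w = u ++ a :: b :: v ∧ w' = u ++ b :: a :: v

def CommClass {S : Type*} (comm : S → S → Prop) : List S → List S → Prop :=
  Relation.ReflTransGen (CommMove comm)

def WStep {S : Type*} (comm : S → S → Prop) (w : List S) (i j : Fin w.length) : Prop :=
  i ≤ j ∧ (w.get i = w.get j ∨ ¬ comm (w.get i) (w.get j))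

/-- The word-poset order `≤_w` on positions of `w`. -/
def WLe {S : Type*} (comm : S → S → Prop) (w : List S) : Fin w.length → Fin w.length → Prop :=
  Relation.TransGen (WStep comm w)

def swapNat (N k : ℕ) : ℕ := if k = N then N + 1 else if k = N + 1 then N else k

lemma swapNat_invol (N k : ℕ) : swapNat N (swapNat N k) = k := by
  unfold swapNat; split_ifs <;> omega

lemma swapNat_lt {S : Type*} (u v : List S) (a b c d : S) {k : ℕ}
    (hk : k < (u ++ a :: b :: v).length) :
    swapNat u.length k < (u ++ c :: d :: v).length := by
  simp only [List.length_append, List.length_cons] at hk ⊢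
  unfold swapNat; split_ifs <;> omega

lemma swapNat_mono (N : ℕ) {k k' : ℕ} (h : k ≤ k') (hne : ¬(k = N ∧ k' = N + 1)) :
    swapNat N k ≤ swapNat N k' := by
  unfold swapNat; split_ifs <;> omega

lemma get_swap {S : Type*} (u v : List S) (a b : S) {k : ℕ}
    (hk : k < (u ++ a :: b :: v).length) :
    (u ++ b :: a :: v)[swapNat u.length k]'(swapNat_lt u v a b b a hk)
      = (u ++ a :: b :: v)[k] := by
  set N := u.length with hN
  rcases lt_or_ge k N with hlt | hge
  · have h1 : swapNat N k = k := by unfold swapNat; split_ifs <;> omega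
    simp only [hN] at h1; simp only [h1]
    rw [List.getElem_append_left hlt, List.getElem_append_left hlt]
  · rcases Nat.lt_or_ge k (N + 2) with hlt2 | hge2
    · obtain hk2 | hk2 : k = N ∨ k = N + 1 := by omega
      · subst hk2
        have h1 : swapNat N N = N + 1 := by unfold swapNat; split_ifs <;> omega
        simp only [hN] at h1 ⊢; simp only [h1]
        rw [List.getElem_append_right (by omega), List.getElem_append_right (by omega)]
        simp
      · subst hk2
        have h1 : swapNat N (N + 1) = N := by unfold swapNat; split_ifs <;> omega
        simp only [hN] at h1 ⊢; simp only [h1]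
        rw [List.getElem_append_right (by omega), List.getElem_append_right (by omega)]
        simp
    · have h1 : swapNat N k = k := by unfold swapNat; split_ifs <;> omega
      simp only [hN] at h1 ⊢; simp only [h1]
      rw [List.getElem_append_right (by omega : N ≤ k),
          List.getElem_append_right (by omega : N ≤ k)]
      obtain ⟨m, hm⟩ : ∃ m, k - N = m + 2 := ⟨k - N - 2, by omega⟩
      simp [← hN, hm]

lemma get_at_N {S : Type*} (u v : List S) (a b : S)
    (h : u.length < (u ++ a :: b :: v).length) :
    (u ++ a :: b :: v)[u.length] = a := by
  rw [List.getElem_append_right (le_refl _)]; simp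

lemma get_at_N1 {S : Type*} (u v : List S) (a b : S)
    (h : u.length + 1 < (u ++ a :: b :: v).length) :
    (u ++ a :: b :: v)[u.length + 1] = b := by
  rw [List.getElem_append_right (by omega)]; simp

lemma wstep_swap {S : Type*} (comm : S → S → Prop) (hirr : ∀ a, ¬ comm a a)
    (u v : List S) (a b : S) (hab : comm a b)
    {i j : Fin (u ++ a :: b :: v).length}
    (hs : WStep comm (u ++ a :: b :: v) i j) :
    WStep comm (u ++ b :: a :: v)
      ⟨swapNat u.length i, swapNat_lt u v a b b a i.2⟩
      ⟨swapNat u.length j, swapNat_lt u v a b b a j.2⟩ := by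
  obtain ⟨hle, hcond⟩ := hs
  have hne : ¬(i.1 = u.length ∧ j.1 = u.length + 1) := by
    rintro ⟨h1, h2⟩
    have gi : (u ++ a :: b :: v).get i = a := by
      simp only [List.get_eq_getElem, h1]; exact get_at_N u v a b (h1 ▸ i.2)
    have gj : (u ++ a :: b :: v).get j = b := by
      simp only [List.get_eq_getElem, h2]; exact get_at_N1 u v a b (h2 ▸ j.2)
    rw [gi, gj] at hcond
    rcases hcond with h | h
    · exact hirr b (h ▸ hab)
    · exact h hab
  constructor
  · exact swapNat_mono u.length hle hne
  · have e1 : (u ++ b :: a :: v).get ⟨swapNat u.length i, swapNat_lt u v a b b a i.2⟩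
        = (u ++ a :: b :: v).get i := by
      simp only [List.get_eq_getElem]; exact get_swap u v a b i.2
    have e2 : (u ++ b :: a :: v).get ⟨swapNat u.length j, swapNat_lt u v a b b a j.2⟩
        = (u ++ a :: b :: v).get j := by
      simp only [List.get_eq_getElem]; exact get_swap u v a b j.2
    rw [e1, e2]; exact hcond

lemma move_iso {S : Type*} (comm : S → S → Prop)
    (hsym : ∀ a b, comm a b → comm b a) (hirr : ∀ a, ¬ comm a a)
    {w w' : List S} (hm : CommMove comm w w') :
    ∃ f : Fin w.length → Fin w'.length, Function.Bijective f ∧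
      (∀ i j, WLe comm w i j ↔ WLe comm w' (f i) (f j)) ∧
      (∀ i, w'.get (f i) = w.get i) := by
  obtain ⟨u, v, a, b, hab, hw, hw'⟩ := hm
  subst hw; subst hw'
  set N := u.length with hN
  refine ⟨fun i => ⟨swapNat N i, swapNat_lt u v a b b a i.2⟩, ?_, ?_, ?_⟩
  · constructor
    · intro i j hij
      apply Fin.ext
      have := congrArg Fin.val hij
      simp only at this
      have : swapNat N (swapNat N i.1) = swapNat N (swapNat N j.1) := by rw [this]
      rwa [swapNat_invol, swapNat_invol] at this
    · intro j
      refine ⟨⟨swapNat N j.1, swapNat_lt u v b a a b j.2⟩, ?_⟩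
      apply Fin.ext
      simp [swapNat_invol]
  · intro i j
    constructor
    · intro hle
      exact Relation.TransGen.lift _ (fun x y hxy => wstep_swap comm hirr u v a b hab hxy) _ _ hle
    · intro hle
      have h2 := Relation.TransGen.lift
        (fun x : Fin (u ++ b :: a :: v).length =>
          (⟨swapNat N x, swapNat_lt u v b a a b x.2⟩ : Fin (u ++ a :: b :: v).length))
        (fun x y hxy => wstep_swap comm hirr u v b a (hsym a b hab) hxy) _ _ hle
      have ei : (⟨swapNat N (swapNat N i.1), swapNat_lt u v b a a b
          (swapNat_lt u v a b b a i.2)⟩ : Fin (u ++ a :: b :: v).length) = i := by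
        apply Fin.ext; simp [swapNat_invol]
      have ej : (⟨swapNat N (swapNat N j.1), swapNat_lt u v b a a b
          (swapNat_lt u v a b b a j.2)⟩ : Fin (u ++ a :: b :: v).length) = j := by
        apply Fin.ext; simp [swapNat_invol]
      simp only [Function.onFun] at h2
      beta_reduce at h2
      rwa [ei, ej] at h2
  · intro i
    simp only [List.get_eq_getElem]
    exact get_swap u v a b i.2

theorem commClass_isomorphic_word_posets {S : Type*} (comm : S → S → Prop)
    (hsym : ∀ a b, comm a b → comm b a) (hirr : ∀ a, ¬ comm a a)
    (w w' : List S) (h : CommClass comm w w') :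
    ∃ f : Fin w.length → Fin w'.length, Function.Bijective f ∧
      (∀ i j, WLe comm w i j ↔ WLe comm w' (f i) (f j)) ∧
      (∀ i, w'.get (f i) = w.get i) := by
  induction h with
  | refl => exact ⟨id, Function.bijective_id, fun i j => Iff.rfl, fun i => rfl⟩
  | tail _ hmove ih =>
    obtain ⟨f, hfb, hford, hflab⟩ := ih
    obtain ⟨g, hgb, hgord, hglab⟩ := move_iso comm hsym hirr hmove
    exact ⟨g ∘ f, hgb.comp hfb,
      fun i j => (hford i j).trans (hgord (f i) (f j)),
      fun i => (hglab (f i)).trans (hflab i)⟩
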